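/- Fix ψ > 0 and define the spherical taper t_ψ : [0, ∞) → ℝ by t_ψ(h) = (1 - h/ψ)² (1 + h/(2ψ)) for 0 ≤ h < ψ and t_ψ(h) = 0 for h ≥ ψ. Then t_ψ is positive definite in ℝ³: for every n ∈ ℕ, every choice of points s₁, …, s_n ∈ ℝ³, and every a₁, …, a_n ∈ ℝ, one has ∑_{i=1}^n ∑_{j=1}^n a_i a_j t_ψ(‖s_i − s_j‖) ≥ 0. -/

import Mathlib

open Real

open MeasureTheory Metric

/-- The spherical taper function with cutoff `ψ`. -/
noncomputable def sphericalTaper (ψ : ℝ) (h : ℝ) : ℝ :=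
  if h < ψ then (1 - h / ψ) ^ 2 * (1 + h / (2 * ψ)) else 0

lemma ofReal_max_zero (a : ℝ) : ENNReal.ofReal (max 0 a) = ENNReal.ofReal a := by
  rcases le_total a 0 with h | h
  · rw [max_eq_left h, ENNReal.ofReal_zero, Eq.comm, ENNReal.ofReal_eq_zero]; exact h
  · rw [max_eq_right h]

/-- Area of an open disk given by a coordinate inequality in `Fin 2 → ℝ`. -/
lemma area_disk (c : ℝ) :
    (volume : Measure (Fin 2 → ℝ)) {y | y 0 ^ 2 + y 1 ^ 2 < c} = ENNReal.ofReal (π * c) := by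
  have hm : MeasurableSet {y : Fin 2 → ℝ | y 0 ^ 2 + y 1 ^ 2 < c} := by
    apply measurableSet_lt _ measurable_const
    fun_prop
  rcases le_or_gt c 0 with hc | hc
  · have : {y : Fin 2 → ℝ | y 0 ^ 2 + y 1 ^ 2 < c} = ∅ := by
      ext y; simp only [Set.mem_setOf_eq, Set.mem_empty_iff_false, iff_false, not_lt]
      nlinarith [sq_nonneg (y 0), sq_nonneg (y 1)]
    rw [this, measure_empty, Eq.comm, ENNReal.ofReal_eq_zero]
    nlinarith [Real.pi_pos]
  · rw [← (EuclideanSpace.volume_preserving_symm_measurableEquiv_toLp (Fin 2)).measure_preimage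
      hm.nullMeasurableSet]
    have hpre : (MeasurableEquiv.toLp 2 (Fin 2 → ℝ)).symm ⁻¹' {y | y 0 ^ 2 + y 1 ^ 2 < c}
        = ball (0 : EuclideanSpace ℝ (Fin 2)) (Real.sqrt c) := by
      ext x
      simp only [Set.mem_preimage, Set.mem_setOf_eq, mem_ball, dist_zero_right,
        EuclideanSpace.norm_eq, MeasurableEquiv.coe_toLp_symm]
      rw [show Real.sqrt c = Real.sqrt c from rfl]
      rw [Fin.sum_univ_two]
      rw [Real.sqrt_lt_sqrt_iff (by positivity)]
      simp [Real.norm_eq_abs, sq_abs]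
    rw [hpre, EuclideanSpace.volume_ball]
    have : Fintype.card (Fin 2) = 2 := by simp
    rw [this]
    rw [← ENNReal.ofReal_pow (Real.sqrt_nonneg c), Real.sq_sqrt hc.le,
      Real.sq_sqrt Real.pi_nonneg, show ((2:ℕ):ℝ)/2+1 = 2 by norm_num, Real.Gamma_two, div_one, ← ENNReal.ofReal_mul hc.le,
      mul_comm c π]

lemma antider (R c : ℝ) (p q : ℝ) :
    ∫ t in p..q, π * (R ^ 2 - (t - c) ^ 2)
      = (π * (R ^ 2 * q - (q - c) ^ 3 / 3)) - (π * (R ^ 2 * p - (p - c) ^ 3 / 3)) := by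
  apply intervalIntegral.integral_eq_sub_of_hasDerivAt
  · intro t ht
    have h1 : HasDerivAt (fun t : ℝ => t - c) 1 t := (hasDerivAt_id t).sub_const c
    have h2 := (h1.pow 3).div_const 3
    have h3 : HasDerivAt (fun t : ℝ => R ^ 2 * t) (R ^ 2) t := by
      simpa using (hasDerivAt_id t).const_mul (R ^ 2)
    have h4 := (h3.sub h2).const_mul π
    exact h4.congr_deriv (by norm_num)
  · apply Continuous.intervalIntegrable
    continuity

lemma hcont (r d : ℝ) : Continuous (fun t : ℝ => max 0 (π * (r ^ 2 - max (t ^ 2) ((t - d) ^ 2)))) := by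
  apply continuous_const.max
  apply continuous_const.mul
  apply continuous_const.sub
  exact (continuous_pow 2).max (by continuity)

lemma hvanish (r d : ℝ) (hr : 0 < r) (hd : 0 ≤ d) :
    ∀ x ∉ Set.Icc (d - r) r, max 0 (π * (r ^ 2 - max (x ^ 2) ((x - d) ^ 2))) = 0 := by
  intro x hx
  simp only [Set.mem_Icc, not_and_or, not_le] at hx
  apply max_eq_left
  apply mul_nonpos_of_nonneg_of_nonpos Real.pi_nonneg
  have : r ^ 2 ≤ max (x ^ 2) ((x - d) ^ 2) := by
    rcases hx with hx | hx
    · exact le_trans (by nlinarith) (le_max_right _ _)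
    · exact le_trans (by nlinarith) (le_max_left _ _)
  linarith

lemma integrable_h (r d : ℝ) (hr : 0 < r) (hd : 0 ≤ d) :
    Integrable (fun t : ℝ => max 0 (π * (r ^ 2 - max (t ^ 2) ((t - d) ^ 2)))) := by
  apply (hcont r d).integrable_of_hasCompactSupport
  apply HasCompactSupport.intro (isCompact_Icc (a := d - r) (b := r))
  exact hvanish r d hr hd

lemma integral_h (r d : ℝ) (hr : 0 < r) (hd : 0 ≤ d) (hd2 : d < 2 * r) :
    ∫ t : ℝ, max 0 (π * (r ^ 2 - max (t ^ 2) ((t - d) ^ 2)))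
      = π * (4 / 3 * r ^ 3 - r ^ 2 * d + d ^ 3 / 12) := by
  have hle1 : d - r ≤ d / 2 := by linarith
  have hle2 : d / 2 ≤ r := by linarith
  rw [← setIntegral_eq_integral_of_forall_compl_eq_zero (s := Set.Icc (d - r) r)
    (hvanish r d hr hd)]
  rw [integral_Icc_eq_integral_Ioc, ← intervalIntegral.integral_of_le (by linarith : d - r ≤ r)]
  have hii : ∀ p q : ℝ, IntervalIntegrable
      (fun t : ℝ => max 0 (π * (r ^ 2 - max (t ^ 2) ((t - d) ^ 2)))) volume p q :=
    fun p q => (integrable_h r d hr hd).intervalIntegrable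
  rw [← intervalIntegral.integral_add_adjacent_intervals (a := d - r) (b := d / 2) (c := r)
    (hii _ _) (hii _ _)]
  have e1 : ∫ t in (d - r)..(d / 2), max 0 (π * (r ^ 2 - max (t ^ 2) ((t - d) ^ 2)))
      = ∫ t in (d - r)..(d / 2), π * (r ^ 2 - (t - d) ^ 2) := by
    apply intervalIntegral.integral_congr
    intro t ht
    rw [Set.uIcc_of_le hle1, Set.mem_Icc] at ht
    have h1 : max (t ^ 2) ((t - d) ^ 2) = (t - d) ^ 2 := max_eq_right (by nlinarith [ht.1, ht.2])
    simp only []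
    rw [h1]
    apply max_eq_right
    apply mul_nonneg Real.pi_nonneg
    nlinarith [mul_nonneg (by linarith [ht.1] : (0:ℝ) ≤ r - (d - t))
      (by linarith [ht.2] : (0:ℝ) ≤ r + (d - t))]
  have e2 : ∫ t in (d / 2)..r, max 0 (π * (r ^ 2 - max (t ^ 2) ((t - d) ^ 2)))
      = ∫ t in (d / 2)..r, π * (r ^ 2 - (t - 0) ^ 2) := by
    apply intervalIntegral.integral_congr
    intro t ht
    rw [Set.uIcc_of_le hle2, Set.mem_Icc] at ht
    have h1 : max (t ^ 2) ((t - d) ^ 2) = t ^ 2 := max_eq_left (by nlinarith [ht.1, ht.2])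
    simp only []
    rw [h1, show (t - 0) ^ 2 = t ^ 2 by ring]
    apply max_eq_right
    apply mul_nonneg Real.pi_nonneg
    nlinarith [mul_nonneg (by linarith [ht.2] : (0:ℝ) ≤ r - t)
      (by linarith [ht.1] : (0:ℝ) ≤ r + t)]
  rw [e1, e2, antider, antider]
  ring

lemma vol_S (r d : ℝ) (hr : 0 < r) (hd : 0 ≤ d) (hd2 : d < 2 * r) :
    (volume : Measure (Fin 3 → ℝ))
      {x | x 0 ^ 2 + x 1 ^ 2 + x 2 ^ 2 < r ^ 2 ∧ (x 0 - d) ^ 2 + x 1 ^ 2 + x 2 ^ 2 < r ^ 2}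
    = ENNReal.ofReal (π * (4 / 3 * r ^ 3 - r ^ 2 * d + d ^ 3 / 12)) := by
  set T : Set (ℝ × (Fin 2 → ℝ)) :=
    {p | p.2 0 ^ 2 + p.2 1 ^ 2 < r ^ 2 - max (p.1 ^ 2) ((p.1 - d) ^ 2)} with hTdef
  have hT : MeasurableSet T := by
    apply measurableSet_lt
    · fun_prop
    · fun_prop
  have hpre : (MeasurableEquiv.piFinSuccAbove (fun _ : Fin 3 => ℝ) 0) ⁻¹' T
      = {x : Fin 3 → ℝ | x 0 ^ 2 + x 1 ^ 2 + x 2 ^ 2 < r ^ 2 ∧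
          (x 0 - d) ^ 2 + x 1 ^ 2 + x 2 ^ 2 < r ^ 2} := by
    ext x
    simp only [Set.mem_preimage, hTdef, Set.mem_setOf_eq, MeasurableEquiv.piFinSuccAbove_apply]
    norm_num [Fin.removeNth, Fin.succAbove]
    rw [show Fin.tail x 0 = x 1 from rfl, show Fin.tail x 1 = x 2 from rfl]
    constructor
    · intro h
      constructor <;>
        nlinarith [le_max_left (x 0 ^ 2) ((x 0 - d) ^ 2), le_max_right (x 0 ^ 2) ((x 0 - d) ^ 2)]
    · rintro ⟨h1, h2⟩
      rcases max_cases (x 0 ^ 2) ((x 0 - d) ^ 2) with ⟨he, _⟩ | ⟨he, _⟩ <;> rw [he] <;> linarith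
  rw [← hpre,
    (volume_preserving_piFinSuccAbove (fun _ : Fin 3 => ℝ) 0).measure_preimage
      hT.nullMeasurableSet]
  rw [show (volume : Measure (ℝ × (Fin 2 → ℝ))) = (volume : Measure ℝ).prod volume from rfl,
    Measure.prod_apply hT]
  have hslice : ∀ t : ℝ, (volume : Measure (Fin 2 → ℝ)) (Prod.mk t ⁻¹' T)
      = ENNReal.ofReal (max 0 (π * (r ^ 2 - max (t ^ 2) ((t - d) ^ 2)))) := by
    intro t
    have : Prod.mk t ⁻¹' T = {y : Fin 2 → ℝ | y 0 ^ 2 + y 1 ^ 2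
        < r ^ 2 - max (t ^ 2) ((t - d) ^ 2)} := rfl
    rw [this, area_disk, ofReal_max_zero]
  simp_rw [hslice]
  rw [← ofReal_integral_eq_lintegral_ofReal (integrable_h r d hr hd)
    (Filter.Eventually.of_forall fun t => le_max_left 0 _), integral_h r d hr hd hd2]

lemma vol_inter (r : ℝ) (hr : 0 < r) (u v : EuclideanSpace ℝ (Fin 3))
    (hd2 : ‖u - v‖ < 2 * r) :
    volume (ball u r ∩ ball v r)
      = ENNReal.ofReal (π * (4 / 3 * r ^ 3 - r ^ 2 * ‖u - v‖ + ‖u - v‖ ^ 3 / 12)) := by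
  set d := ‖u - v‖ with hddef
  have hd : 0 ≤ d := norm_nonneg _
  set w := v - u with hwdef
  have hw : ‖w‖ = d := by rw [hwdef, hddef, norm_sub_rev]
  set e₀ : EuclideanSpace ℝ (Fin 3) := EuclideanSpace.single 0 1 with he₀def
  have he₀ : ‖e₀‖ = 1 := by rw [he₀def, EuclideanSpace.norm_single, norm_one]
  have hde : ‖d • e₀‖ = d := by rw [norm_smul, he₀, mul_one, Real.norm_eq_abs, abs_of_nonneg hd]
  set f := Submodule.reflection (ℝ ∙ (w - d • e₀))ᗮ with hfdef
  have hfw : f w = d • e₀ := Submodule.reflection_sub (hw.trans hde.symm)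
  have hkey : (fun x => f (x - u)) ⁻¹' (ball (0 : EuclideanSpace ℝ (Fin 3)) r ∩ ball (d • e₀) r)
      = ball u r ∩ ball v r := by
    ext x
    simp only [Set.mem_preimage, Set.mem_inter_iff, mem_ball_iff_norm, sub_zero]
    rw [f.norm_map, ← hfw, ← map_sub, f.norm_map,
      show x - u - w = x - v by rw [hwdef]; abel]
  have hmp : MeasurePreserving (fun x : EuclideanSpace ℝ (Fin 3) => f (x - u)) volume volume :=
    f.measurePreserving.comp (measurePreserving_sub_right volume u)
  rw [← hkey, hmp.measure_preimage
    ((measurableSet_ball.inter measurableSet_ball).nullMeasurableSet)]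
  -- now coordinates
  set S : Set (Fin 3 → ℝ) :=
    {x | x 0 ^ 2 + x 1 ^ 2 + x 2 ^ 2 < r ^ 2 ∧ (x 0 - d) ^ 2 + x 1 ^ 2 + x 2 ^ 2 < r ^ 2}
    with hSdef
  have hS : MeasurableSet S := by
    have : S = {x : Fin 3 → ℝ | x 0 ^ 2 + x 1 ^ 2 + x 2 ^ 2 < r ^ 2}
        ∩ {x : Fin 3 → ℝ | (x 0 - d) ^ 2 + x 1 ^ 2 + x 2 ^ 2 < r ^ 2} := rfl
    rw [this]
    exact (measurableSet_lt (by fun_prop) measurable_const).inter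
      (measurableSet_lt (by fun_prop) measurable_const)
  have hpre : (MeasurableEquiv.toLp 2 (Fin 3 → ℝ)).symm ⁻¹' S
      = ball (0 : EuclideanSpace ℝ (Fin 3)) r ∩ ball (d • e₀) r := by
    ext x
    simp only [Set.mem_preimage, hSdef, Set.mem_setOf_eq, Set.mem_inter_iff,
      mem_ball_iff_norm, sub_zero, EuclideanSpace.norm_eq, Real.sqrt_lt' hr,
      Real.norm_eq_abs, sq_abs, Fin.sum_univ_three]
    have h0 : ∀ i, (x - d • e₀) i = x i - d * e₀ i := fun i => rfl
    have hcoord : ∀ i : Fin 3, (MeasurableEquiv.toLp 2 (Fin 3 → ℝ)).symm x i = x i := fun i => rfl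
    have he0 : e₀ 0 = 1 := by rw [he₀def]; simp [EuclideanSpace.single_apply]
    have he1 : e₀ 1 = 0 := by rw [he₀def]; simp [EuclideanSpace.single_apply]
    have he2 : e₀ 2 = 0 := by rw [he₀def]; simp [EuclideanSpace.single_apply]
    rw [h0 0, h0 1, h0 2, hcoord 0, hcoord 1, hcoord 2, he0, he1, he2]
    norm_num
  rw [← hpre, (EuclideanSpace.volume_preserving_symm_measurableEquiv_toLp (Fin 3)).measure_preimage
    hS.nullMeasurableSet]
  exact vol_S r d hr hd hd2

lemma ball_disjoint (r : ℝ) (u v : EuclideanSpace ℝ (Fin 3)) (h : 2 * r ≤ ‖u - v‖) :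
    ball u r ∩ ball v r = ∅ := by
  ext x
  simp only [Set.mem_inter_iff, mem_ball, Set.mem_empty_iff_false, iff_false, not_and, not_lt]
  intro h1
  rw [dist_comm x u] at h1
  have := dist_triangle u x v
  rw [← dist_eq_norm] at h
  linarith

lemma kernel_eq (ψ : ℝ) (hψ : 0 < ψ) (u v : EuclideanSpace ℝ (Fin 3)) :
    (volume (ball u (ψ / 2) ∩ ball v (ψ / 2))).toReal
      = (π * ψ ^ 3 / 6) * sphericalTaper ψ ‖u - v‖ := by
  set d := ‖u - v‖ with hddef
  have hd : 0 ≤ d := norm_nonneg _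
  by_cases hlt : d < ψ
  · rw [vol_inter (ψ / 2) (by linarith) u v (by rw [← hddef]; linarith)]
    rw [ENNReal.toReal_ofReal (by
      nlinarith [mul_nonneg (sq_nonneg (ψ - d)) (by linarith : (0:ℝ) ≤ d + 2 * ψ),
        Real.pi_nonneg, sq_nonneg (ψ - d)])]
    rw [sphericalTaper, if_pos hlt, ← hddef]
    have hψ' : ψ ≠ 0 := ne_of_gt hψ
    field_simp
    ring
  · rw [ball_disjoint (ψ / 2) u v (by rw [← hddef]; linarith), measure_empty,
      ENNReal.toReal_zero, sphericalTaper, if_neg hlt, mul_zero]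

/-- For `ψ > 0`, the spherical taper is positive definite in `ℝ³`: for
every `n`, points `s₁, …, s_n ∈ ℝ³` and reals `a₁, …, a_n`,
`∑ᵢ ∑ⱼ aᵢ aⱼ t_ψ(‖sᵢ − sⱼ‖) ≥ 0`. -/
theorem sphericalTaper_posDef (ψ : ℝ) (hψ : 0 < ψ) (n : ℕ)
    (s : Fin n → EuclideanSpace ℝ (Fin 3)) (a : Fin n → ℝ) :
    0 ≤ ∑ i, ∑ j, a i * a j * sphericalTaper ψ ‖s i - s j‖ := by
  set B : Fin n → Set (EuclideanSpace ℝ (Fin 3)) := fun i => ball (s i) (ψ / 2) with hBdef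
  have hBm : ∀ i, MeasurableSet (B i) := fun i => measurableSet_ball
  have hprod : ∀ i j, (fun x => (B i).indicator (1 : EuclideanSpace ℝ (Fin 3) → ℝ) x * (B j).indicator 1 x)
      = (B i ∩ B j).indicator 1 := by
    intro i j
    rw [Set.inter_indicator_one]
    rfl
  have hInt : ∀ i j, Integrable (fun x => (B i).indicator (1 : EuclideanSpace ℝ (Fin 3) → ℝ) x
      * (B j).indicator 1 x) volume := by
    intro i j
    rw [hprod i j, integrable_indicator_iff ((hBm i).inter (hBm j))]
    exact integrableOn_const (lt_of_le_of_lt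
      (measure_mono Set.inter_subset_left) measure_ball_lt_top).ne
  have key : ∀ i j, ∫ x, (B i).indicator (1 : EuclideanSpace ℝ (Fin 3) → ℝ) x * (B j).indicator 1 x
      = (π * ψ ^ 3 / 6) * sphericalTaper ψ ‖s i - s j‖ := by
    intro i j
    rw [hprod i j, integral_indicator_one ((hBm i).inter (hBm j))]
    exact kernel_eq ψ hψ (s i) (s j)
  have h1 : (π * ψ ^ 3 / 6) * (∑ i, ∑ j, a i * a j * sphericalTaper ψ ‖s i - s j‖)
      = ∫ x, (∑ i, a i * (B i).indicator 1 x) ^ 2 := by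
    have expand : ∀ x, (∑ i, a i * (B i).indicator (1 : EuclideanSpace ℝ (Fin 3) → ℝ) x) ^ 2
        = ∑ i, ∑ j, (a i * a j) * ((B i).indicator 1 x * (B j).indicator 1 x) := by
      intro x
      rw [sq, Finset.sum_mul_sum]
      exact Finset.sum_congr rfl fun i _ => Finset.sum_congr rfl fun j _ => by ring
    simp_rw [expand]
    rw [integral_finset_sum _ (fun i _ => integrable_finset_sum _
      (fun j _ => (hInt i j).const_mul (a i * a j)))]
    rw [Finset.mul_sum]
    refine Finset.sum_congr rfl fun i _ => ?_
    rw [integral_finset_sum _ (fun j _ => (hInt i j).const_mul (a i * a j)), Finset.mul_sum]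
    refine Finset.sum_congr rfl fun j _ => ?_
    rw [MeasureTheory.integral_const_mul, key i j]
    ring
  have h2 : 0 ≤ ∫ x, (∑ i, a i * (B i).indicator (1 : EuclideanSpace ℝ (Fin 3) → ℝ) x) ^ 2 :=
    integral_nonneg fun x => sq_nonneg _
  rw [← h1] at h2
  have hV : 0 < π * ψ ^ 3 / 6 := by positivity
  nlinarith [h2, hV]
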